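/- Let n = sm with s even, s/2 odd and m odd, and let k be an integer with gcd(k,n)=2. Let F be defined by F(x) = x^{2^k+1}+1 for x ∈ F_{2^s} and F(x) = x^{2^k+1} for x ∉ F_{2^s}. Then for all a, b ∈ F_{2^n} \ {0}: β_F(a,b) ≤ 4 if a ∈ F_{2^s} \ {0} or b ∈ F_{2^s} \ {0}, and β_F(a,b) ≤ 22 if a, b ∉ F_{2^s}. -/

import Mathlib

namespace S13
lemma gcd_two_pow_sub_one (m n : ℕ) :
    Nat.gcd (2 ^ m - 1) (2 ^ n - 1) = 2 ^ Nat.gcd m n - 1 := by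
  induction m, n using Nat.gcd.induction with
  | H0 n => simp
  | H1 m n hm ih =>
    have hd : (2 ^ m - 1 : ℕ) ∣ (2 ^ (m * (n / m)) - 1) := by
      simpa [pow_mul] using Nat.sub_dvd_pow_sub_pow (2 ^ m) 1 (n / m)
    obtain ⟨t, ht⟩ := hd
    have h1 : (1 : ℕ) ≤ 2 ^ (n % m) := Nat.one_le_two_pow
    have h3 : 2 ^ (m * (n / m)) * 2 ^ (n % m) = 2 ^ n := by
      rw [← pow_add, Nat.div_add_mod]
    have hY : 2 ^ (m * (n / m)) = (2 ^ m - 1) * t + 1 := by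
      have h2 : (1 : ℕ) ≤ 2 ^ (m * (n / m)) := Nat.one_le_two_pow
      omega
    have key : 2 ^ n - 1 = (2 ^ m - 1) * (t * 2 ^ (n % m)) + (2 ^ (n % m) - 1) := by
      rw [← h3, hY]
      have expand : ((2 ^ m - 1) * t + 1) * 2 ^ (n % m)
          = (2 ^ m - 1) * (t * 2 ^ (n % m)) + 2 ^ (n % m) := by ring
      rw [expand]; omega
    have hlt : 2 ^ (n % m) - 1 < 2 ^ m - 1 := by
      have : 2 ^ (n % m) < 2 ^ m := Nat.pow_lt_pow_right one_lt_two (Nat.mod_lt n hm)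
      omega
    rw [Nat.gcd_rec (2 ^ m - 1) (2 ^ n - 1), key, Nat.mul_add_mod, Nat.mod_eq_of_lt hlt, ih,
      Nat.gcd_rec m n]
end S13


namespace S13


lemma arith {s m k : ℕ} (hs : Even s) (hs2 : Odd (s / 2)) (hm : Odd m)
    (hk : Nat.gcd k (s * m) = 2) (hk0 : k ≠ 0) :
    Nat.gcd (2 ^ k - 1) (2 ^ (s * m) - 1) = 3 ∧
    Nat.gcd (2 ^ k + 1) (2 ^ (s * m) - 1) = 1 ∧
    2 ∣ k ∧ Odd ((s * m) / 2) := by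
  set n := s * m with hn
  obtain ⟨r, hr⟩ := hs
  have hsr : s = 2 * r := by omega
  have hr2 : s / 2 = r := by omega
  have hkd : 2 ∣ k := hk ▸ Nat.gcd_dvd_left k n
  have hu : n = 2 * (r * m) := by rw [hn, hsr]; ring
  have huodd : Odd (r * m) := (hr2 ▸ hs2).mul hm
  have hnodd : Odd (n / 2) := by rw [hu]; simpa using huodd
  have hgkr : Nat.gcd k (r * m) = 1 := by
    have hdvd2 : Nat.gcd k (r * m) ∣ 2 := by
      rw [← hk]
      exact Nat.dvd_gcd (Nat.gcd_dvd_left _ _) ((Nat.gcd_dvd_right _ _).trans ⟨2, by omega⟩)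
    rcases (Nat.dvd_prime Nat.prime_two).mp hdvd2 with h | h
    · exact h
    · exfalso
      have h2 : 2 ∣ r * m := h ▸ Nat.gcd_dvd_right _ _
      rcases huodd with ⟨j, hj⟩
      omega
  have hg2k : Nat.gcd (2 * k) n = 2 := by
    rw [hu, Nat.gcd_mul_left, hgkr]
  have hN1 : Nat.gcd (2 ^ k - 1) (2 ^ n - 1) = 3 := by
    rw [gcd_two_pow_sub_one, hk]
    norm_num
  have h3dvd : (3 : ℕ) ∣ 2 ^ k - 1 := by
    obtain ⟨j, hj⟩ := hkd
    have : (4 - 1 : ℕ) ∣ 4 ^ j - 1 ^ j := Nat.sub_dvd_pow_sub_pow 4 1 j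
    simpa [hj, pow_mul] using this
  have hN2 : Nat.gcd (2 ^ k + 1) (2 ^ n - 1) = 1 := by
    have hK : (1 : ℕ) ≤ 2 ^ k := Nat.one_le_two_pow
    have hmul : (2 ^ k + 1) * (2 ^ k - 1) = 2 ^ (2 * k) - 1 := by
      rcases Nat.exists_eq_add_of_le hK with ⟨K, hKe⟩
      rw [two_mul, pow_add, hKe]
      have e1 : (1 + K + 1) * (1 + K - 1) = K * K + 2 * K := by
        rw [Nat.add_sub_cancel_left]; ring
      have e2 : (1 + K) * (1 + K) = K * K + 2 * K + 1 := by ring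
      rw [e1, e2]; omega
    have hdvd : Nat.gcd (2 ^ k + 1) (2 ^ n - 1) ∣ 3 := by
      have h1 : Nat.gcd (2 ^ k + 1) (2 ^ n - 1) ∣ 2 ^ (2 * k) - 1 :=
        (Nat.gcd_dvd_left _ _).trans ⟨2 ^ k - 1, hmul.symm⟩
      have h2 : Nat.gcd (2 ^ k + 1) (2 ^ n - 1) ∣ Nat.gcd (2 ^ (2 * k) - 1) (2 ^ n - 1) :=
        Nat.dvd_gcd h1 (Nat.gcd_dvd_right _ _)
      rwa [gcd_two_pow_sub_one, hg2k] at h2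
    rcases (Nat.dvd_prime Nat.prime_three).mp hdvd with h | h
    · exact h
    · exfalso
      have h1 : (3 : ℕ) ∣ 2 ^ k + 1 := h ▸ Nat.gcd_dvd_left _ _
      rcases h1 with ⟨j1, hj1⟩
      rcases h3dvd with ⟨j2, hj2⟩
      omega
  exact ⟨hN1, hN2, hkd, hnodd⟩


end S13

namespace S13
variable {F : Type*} [Field F]

lemma char_two [Fintype F] (n : ℕ) (hn : n ≠ 0) (hcard : Fintype.card F = 2 ^ n) :
    CharP F 2 := by
  obtain ⟨j, hp, hq⟩ := FiniteField.card F (ringChar F)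
  have h2 : ringChar F ∣ 2 ^ n := by
    rw [← hcard, hq]; exact dvd_pow_self _ (by exact_mod_cast j.ne_zero)
  have : ringChar F = 2 := (Nat.prime_dvd_prime_iff_eq hp Nat.prime_two).mp (hp.dvd_of_dvd_pow h2)
  exact this ▸ ringChar.charP F

/-- linearized map -/
def L (k : ℕ) (v x : F) : F := v ^ (2 ^ k) * x + v * x ^ (2 ^ k)

/-- trace to F₄ -/
def Tra (h : ℕ) (u : F) : F := ∑ i ∈ Finset.range h, u ^ (4 ^ i)

variable [CharP F 2]

lemma frob (j : ℕ) (x y : F) : (x + y) ^ 2 ^ j = x ^ 2 ^ j + y ^ 2 ^ j :=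
  haveI : Fact (Nat.Prime 2) := ⟨Nat.prime_two⟩
  add_pow_char_pow x y 2 j

lemma frob4 (j : ℕ) (x y : F) : (x + y) ^ 4 ^ j = x ^ 4 ^ j + y ^ 4 ^ j := by
  have : (4 : ℕ) ^ j = 2 ^ (2 * j) := by rw [pow_mul]; norm_num
  rw [this]; exact frob _ x y

lemma expand (k : ℕ) (x v : F) :
    (x + v) ^ (2 ^ k + 1) = x ^ (2 ^ k + 1) + L k v x + v ^ (2 ^ k + 1) := by
  rw [pow_add, pow_add, pow_add, frob, L]
  ring

lemma two_eq_zero : (2 : F) = 0 := by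
  have := CharP.cast_eq_zero F 2; exact_mod_cast this

lemma add_self (x : F) : x + x = 0 := by
  linear_combination x * (two_eq_zero (F := F))

lemma add_eq_zero_iff {x y : F} : x + y = 0 ↔ x = y := by
  constructor
  · intro h; linear_combination h - y * (two_eq_zero (F := F))
  · intro h; rw [h]; exact add_self y

lemma sq_inj (x y : F) (h : x ^ 2 = y ^ 2) : x = y := by
  have h2 : (x + y) ^ 2 = 0 := by
    have hf := frob 1 x y
    norm_num at hf
    rw [hf, h]; exact add_self _
  exact add_eq_zero_iff.mp (pow_eq_zero_iff (n := 2) (by norm_num) |>.mp h2)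

lemma pow4pow (z : F) (hz : z ^ 4 = z) (i : ℕ) : z ^ 4 ^ i = z := by
  induction i with
  | zero => simp
  | succ i ih => rw [pow_succ, pow_mul, ih, hz]

lemma powEven (z : F) (hz : z ^ 4 = z) (j : ℕ) (hj : 2 ∣ j) : z ^ 2 ^ j = z := by
  obtain ⟨i, rfl⟩ := hj
  have h4 : (2 : ℕ) ^ (2 * i) = 4 ^ i := by rw [pow_mul]; norm_num
  rw [h4]
  exact pow4pow z hz i


lemma Tra_add (h : ℕ) (u w : F) : Tra h (u + w) = Tra h u + Tra h w := by
  unfold Tra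
  rw [← Finset.sum_add_distrib]
  exact Finset.sum_congr rfl fun i _ => frob4 i u w

lemma Tra_smul (h : ℕ) (c u : F) (hc : c ^ 4 = c) : Tra h (c * u) = c * Tra h u := by
  unfold Tra
  rw [Finset.mul_sum]
  exact Finset.sum_congr rfl fun i _ => by rw [mul_pow, pow4pow c hc i]

omit [CharP F 2] in
lemma Tra_pow4 (h : ℕ) (hh : 0 < h) (u : F) (hu : u ^ 4 ^ h = u) : Tra h (u ^ 4) = Tra h u := by
  unfold Tra
  have e : ∀ i : ℕ, (u ^ 4) ^ 4 ^ i = u ^ 4 ^ (i + 1) := by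
    intro i
    rw [← pow_mul]
    congr 1
    rw [pow_succ]
    ring
  rw [Finset.sum_congr rfl fun i _ => e i]
  obtain ⟨h', rfl⟩ : ∃ h', h = h' + 1 := ⟨h - 1, by omega⟩
  have h1 : ∑ i ∈ Finset.range (h' + 1 + 1), u ^ 4 ^ i
      = (∑ i ∈ Finset.range (h' + 1), u ^ 4 ^ (i + 1)) + u ^ 4 ^ 0 :=
    Finset.sum_range_succ' (fun i => u ^ 4 ^ i) (h' + 1)
  have h2 : ∑ i ∈ Finset.range (h' + 1 + 1), u ^ 4 ^ i
      = (∑ i ∈ Finset.range (h' + 1), u ^ 4 ^ i) + u ^ 4 ^ (h' + 1) := Finset.sum_range_succ _ _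
  have h3 : u ^ 4 ^ (h' + 1) = u ^ 4 ^ 0 := by rw [hu, pow_zero, pow_one]
  apply add_right_cancel (b := u ^ 4 ^ 0)
  rw [← h1, h2, h3]

omit [CharP F 2] in
lemma Tra_pow4iter (h j : ℕ) (hyp : ∀ u : F, Tra h (u ^ 4) = Tra h u) (u : F) :
    Tra h (u ^ 4 ^ j) = Tra h u := by
  induction j with
  | zero => simp
  | succ j ih =>
    have : u ^ 4 ^ (j + 1) = (u ^ 4 ^ j) ^ 4 := by rw [← pow_mul, pow_succ]
    rw [this, hyp, ih]

lemma Tra_one (h : ℕ) (hodd : Odd h) : Tra h (1 : F) = 1 := by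
  unfold Tra
  simp only [one_pow]
  rw [Finset.sum_const, Finset.card_range, nsmul_eq_mul, mul_one]
  obtain ⟨j, rfl⟩ := hodd
  push_cast
  rw [two_eq_zero (F := F)]
  ring

lemma trace_val (h k : ℕ) (hk2 : 2 ∣ k) (hh0 : 0 < h) (hodd : Odd h)
    (hpow : ∀ u : F, u ^ 4 ^ h = u) (a x c w : F) (ha : a ≠ 0) (hc : c ^ 4 = c)
    (heq : c * L k a x = w + c ^ 2 * a ^ (2 ^ k + 1)) :
    Tra h (w / a ^ (2 ^ k + 1)) = c ^ 2 := by
  have hA : a ^ (2 ^ k + 1) ≠ 0 := pow_ne_zero _ ha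
  set A := a ^ (2 ^ k + 1) with hAdef
  set t := x / a with htdef
  have hL : L k a x = A * (t + t ^ 2 ^ k) := by
    rw [L, hAdef, htdef, div_pow]
    field_simp
    ring
  have hw : w / A = c * t + c * t ^ 2 ^ k + c ^ 2 := by
    rw [div_eq_iff hA]
    linear_combination -heq + c * hL - c ^ 2 * A * (two_eq_zero (F := F))
  have hc2 : (c ^ 2) ^ 4 = c ^ 2 := by
    rw [← pow_mul, show 2 * 4 = 4 * 2 from by ring, pow_mul, hc]
  have hTt : Tra h (t ^ 2 ^ k) = Tra h t := by
    obtain ⟨i, rfl⟩ := hk2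
    have h4 : (2 : ℕ) ^ (2 * i) = 4 ^ i := by rw [pow_mul]; norm_num
    rw [h4]
    exact Tra_pow4iter h i (fun u => Tra_pow4 h hh0 u (hpow u)) t
  rw [hw, Tra_add, Tra_add, Tra_smul h c t hc, Tra_smul h c _ hc,
    show (c ^ 2 : F) = c ^ 2 * 1 by ring, Tra_smul h (c ^ 2) 1 hc2, Tra_one h hodd, hTt]
  linear_combination (c * Tra h t) * (two_eq_zero (F := F))

lemma ker_L (k : ℕ) (hmemC : ∀ z : F, z ^ 2 ^ k = z → z ^ 4 = z) (v x : F) (hv : v ≠ 0)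
    (h : L k v x = 0) : ∃ c : F, c ^ 4 = c ∧ x = c * v := by
  have h' : v ^ 2 ^ k * x = v * x ^ 2 ^ k := add_eq_zero_iff.mp h
  refine ⟨x / v, hmemC _ ?_, (div_mul_cancel₀ x hv).symm⟩
  rw [div_pow, div_eq_div_iff (pow_ne_zero _ hv) hv]
  linear_combination -h'

omit [CharP F 2] in
lemma powd_inj (k n : ℕ) (hgcd : Nat.gcd (2 ^ k + 1) (2 ^ n - 1) = 1)
    (hpow1 : ∀ z : F, z ≠ 0 → z ^ (2 ^ n - 1) = 1) (z w : F)
    (h : z ^ (2 ^ k + 1) = w ^ (2 ^ k + 1)) : z = w := by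
  by_cases hw : w = 0
  · subst hw
    rw [zero_pow (Nat.succ_ne_zero _)] at h
    exact pow_eq_zero_iff (Nat.succ_ne_zero _) |>.mp h
  have hz : z ≠ 0 := by
    intro h0
    subst h0
    rw [zero_pow (Nat.succ_ne_zero _)] at h
    exact hw (pow_eq_zero_iff (Nat.succ_ne_zero _) |>.mp h.symm)
  have hr : (z / w) ^ (2 ^ k + 1) = 1 := by
    rw [div_pow, h, div_self (pow_ne_zero _ hw)]
  have hr2 : (z / w) ^ (2 ^ n - 1) = 1 := hpow1 _ (div_ne_zero hz hw)
  have hg := pow_gcd_eq_one.mpr ⟨hr, hr2⟩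
  rw [hgcd, pow_one] at hg
  exact (div_eq_one_iff_eq hw).mp hg

omit [CharP F 2] in
lemma memC_lemma (k n : ℕ) (hgcd : Nat.gcd (2 ^ k - 1) (2 ^ n - 1) = 3)
    (hpow1 : ∀ z : F, z ≠ 0 → z ^ (2 ^ n - 1) = 1) (z : F) (hz : z ^ 2 ^ k = z) :
    z ^ 4 = z := by
  by_cases h0 : z = 0
  · simp [h0]
  have hk1 : (1:ℕ) ≤ 2 ^ k := Nat.one_le_two_pow
  have h1 : z ^ (2 ^ k - 1) = 1 := by
    have hmul : z ^ (2 ^ k - 1) * z = 1 * z := by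
      rw [← pow_succ, show 2 ^ k - 1 + 1 = 2 ^ k by omega, hz, one_mul]
    exact mul_right_cancel₀ h0 hmul
  have h3 := pow_gcd_eq_one.mpr ⟨h1, hpow1 z h0⟩
  rw [hgcd] at h3
  calc z ^ 4 = z ^ 3 * z := by ring
  _ = z := by rw [h3, one_mul]

omit [CharP F 2] in
lemma C_card [Fintype F] : ({z : F | z ^ 4 = z} : Set F).ncard ≤ 4 := by
  classical
  have hsub : {z : F | z ^ 4 = z} ⊆
      insert (0 : F) (((Polynomial.nthRoots 3 (1 : F)).toFinset : Finset F) : Set F) := by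
    intro z hz
    simp only [Set.mem_setOf_eq] at hz
    by_cases h0 : z = 0
    · exact Set.mem_insert_iff.mpr (Or.inl h0)
    · refine Set.mem_insert_iff.mpr (Or.inr ?_)
      simp only [Finset.coe_sort_coe, Finset.mem_coe, Multiset.mem_toFinset]
      rw [Polynomial.mem_nthRoots (by norm_num)]
      have h34 : z ^ 3 * z = 1 * z := by linear_combination hz
      exact mul_right_cancel₀ h0 h34
  have h1 := Set.ncard_le_ncard hsub (Set.Finite.insert _ (Finset.finite_toSet _))
  have h2 := Set.ncard_insert_le (0 : F)
    (((Polynomial.nthRoots 3 (1 : F)).toFinset : Finset F) : Set F)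
  have h3 : (((Polynomial.nthRoots 3 (1 : F)).toFinset : Finset F) : Set F).ncard
      = (Polynomial.nthRoots 3 (1 : F)).toFinset.card := Set.ncard_coe_finset _
  have h4 : (Polynomial.nthRoots 3 (1 : F)).toFinset.card ≤ 3 :=
    (Multiset.toFinset_card_le _).trans (by simpa using Polynomial.card_nthRoots 3 (1 : F))
  omega

omit [CharP F 2] in
lemma inj_count {α β : Type*} [Finite β] {s : Set α} {CC : Set β} {q : ℕ} (hCC : CC.ncard ≤ q)
    (h : s.Nonempty → ∃ g : α → β, (∀ p ∈ s, g p ∈ CC) ∧ Set.InjOn g s) : s.ncard ≤ q := by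
  rcases s.eq_empty_or_nonempty with rfl | hne
  · simp
  obtain ⟨g, hg, hinj⟩ := h hne
  exact (Set.ncard_le_ncard_of_injOn g hg hinj CC.toFinite).trans hCC

omit [CharP F 2] in
lemma union7_le {α : Type*} [Finite α] (A B C D E G H : Set α)
    (hA : A.ncard ≤ 4) (hB : B.ncard ≤ 1) (hC : C.ncard ≤ 1) (hD : D.ncard ≤ 4)
    (hE : E.ncard ≤ 4) (hG : G.ncard ≤ 4) (hH : H.ncard ≤ 4) :
    (A ∪ B ∪ C ∪ D ∪ E ∪ G ∪ H).ncard ≤ 22 := by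
  have t1 := Set.ncard_union_le A B
  have t2 := Set.ncard_union_le (A ∪ B) C
  have t3 := Set.ncard_union_le (A ∪ B ∪ C) D
  have t4 := Set.ncard_union_le (A ∪ B ∪ C ∪ D) E
  have t5 := Set.ncard_union_le (A ∪ B ∪ C ∪ D ∪ E) G
  have t6 := Set.ncard_union_le (A ∪ B ∪ C ∪ D ∪ E ∪ G) H
  omega

omit [CharP F 2] in
lemma sub_count {α : Type*} (s : Set α) (h : ∀ p ∈ s, ∀ q ∈ s, p = q) : s.ncard ≤ 1 := by
  have hs : s.Subsingleton := fun x hx y hy => h x hx y hy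
  exact (Set.ncard_le_one hs.finite).mpr fun a ha b hb => h a ha b hb

end S13


/-- `beta f a b` is the number of pairs `(x, y)` with `f x + f y = b` and
`f (x+a) + f (y+a) = b` (the boomerang counting function). -/
noncomputable def beta {F : Type*} [Field F] (f : F → F) (a b : F) : ℕ :=
  Nat.card {p : F × F // f p.1 + f p.2 = b ∧ f (p.1 + a) + f (p.2 + a) = b}

set_option maxHeartbeats 1000000 in
open S13 in
/-- Let `n = s·m` with `s` even, `s/2` odd, `m` odd, and `gcd(k,n) = 2`.
Let `F = F_{2^n}`, `S = F_{2^s}`, and let `Fn` equal `x^(2^k+1) + 1` on `S` and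
`x^(2^k+1)` off `S`. Then for all nonzero `a, b`: `β_F(a,b) ≤ 4` if `a ∈ S \ {0}` or
`b ∈ S \ {0}`, and `β_F(a,b) ≤ 22` if `a, b ∉ S`. -/
theorem stmt13 {F : Type*} [Field F] [Fintype F] (n s m k : ℕ)
    (hn : n = s * m) (hs : Even s) (hs2 : Odd (s / 2)) (hm : Odd m)
    (hk : Nat.gcd k n = 2) (hcard : Fintype.card F = 2 ^ n)
    (S : Set F) (hS : S = {x : F | x ^ (2 ^ s) = x})
    (Fn : F → F)
    (hFn1 : ∀ x ∈ S, Fn x = x ^ (2 ^ k + 1) + 1)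
    (hFn2 : ∀ x ∉ S, Fn x = x ^ (2 ^ k + 1)) :
    ∀ a b : F, a ≠ 0 → b ≠ 0 →
      ((a ∈ S ∨ b ∈ S) → beta Fn a b ≤ 4) ∧
      (a ∉ S → b ∉ S → beta Fn a b ≤ 22) := by
  classical
  subst hS
  intro a b ha hb
  set SS : Set F := {x : F | x ^ (2 ^ s) = x} with hSS
  -- basic numerics
  have hs0 : s ≠ 0 := by rintro rfl; simp at hs2
  have hm0 : m ≠ 0 := by rintro rfl; simp at hm
  have hn0 : n ≠ 0 := by rw [hn]; exact Nat.mul_ne_zero hs0 hm0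
  haveI hchar : CharP F 2 := S13.char_two n hn0 hcard
  have hpc : ∀ z : F, z ^ 2 ^ n = z := fun z => by
    rw [← hcard]; exact FiniteField.pow_card z
  have hpow1 : ∀ z : F, z ≠ 0 → z ^ (2 ^ n - 1) = 1 := by
    intro z hz
    have h1 : (1:ℕ) ≤ 2 ^ n := Nat.one_le_two_pow
    have hmul : z ^ (2 ^ n - 1) * z = 1 * z := by
      rw [← pow_succ, show 2 ^ n - 1 + 1 = 2 ^ n by omega, hpc, one_mul]
    exact mul_right_cancel₀ hz hmul
  -- Fn in uniform shape
  set χ : F → F := fun z => if z ∈ SS then 1 else 0 with hχ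
  have hFn : ∀ x : F, Fn x = x ^ (2 ^ k + 1) + χ x := by
    intro x
    by_cases hx : x ∈ SS
    · rw [hFn1 x hx, hχ]; simp [hx]
    · rw [hFn2 x hx, hχ]; simp [hx]
  -- the solution set
  set Sol : Set (F × F) :=
    {p : F × F | Fn p.1 + Fn p.2 = b ∧ Fn (p.1 + a) + Fn (p.2 + a) = b} with hSol
  have hbeta : beta Fn a b = Sol.ncard := by
    rw [← Nat.card_coe_set_eq]; rfl
  -- membership basics for the subfield SS
  have S0 : (0 : F) ∈ SS := by
    simp only [hSS, Set.mem_setOf_eq]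
    exact zero_pow (by positivity)
  have S1 : (1 : F) ∈ SS := by simp [hSS]
  have Sadd : ∀ {x y : F}, x ∈ SS → y ∈ SS → x + y ∈ SS := by
    intro x y hx hy
    simp only [hSS, Set.mem_setOf_eq] at *
    rw [frob s x y, hx, hy]
  have Smul : ∀ {x y : F}, x ∈ SS → y ∈ SS → x * y ∈ SS := by
    intro x y hx hy
    simp only [hSS, Set.mem_setOf_eq] at *
    rw [mul_pow, hx, hy]
  have SaddIff : ∀ {v : F}, v ∈ SS → ∀ z : F, (z + v ∈ SS ↔ z ∈ SS) := by
    intro v hv z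
    constructor
    · intro h
      have := Sadd h hv
      simpa [add_assoc, add_self v] using this
    · intro h; exact Sadd h hv
  have SC : ∀ {c : F}, c ^ 4 = c → c ∈ SS := by
    intro c hc
    simp only [hSS, Set.mem_setOf_eq]
    exact powEven c hc s hs.two_dvd
  have Smul_cancel : ∀ {c z : F}, c ∈ SS → c ≠ 0 → c * z ∈ SS → z ∈ SS := by
    intro c z hc hc0 hcz
    have hinv : c⁻¹ ∈ SS := by
      simp only [hSS, Set.mem_setOf_eq] at *
      rw [inv_pow, hc]
    have := Smul hinv hcz
    rwa [inv_mul_cancel_left₀ hc0] at this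
  -- the trivial case k = 0 (forces n = 2)
  by_cases hk0 : k = 0
  · have hn2 : n = 2 := by rw [hk0] at hk; simpa using hk
    have hall : ∀ z : F, z ∈ SS := by
      intro z
      have hs2' : s = 2 := by
        have hdvd : s ∣ 2 := ⟨m, by rw [← hn2, hn]⟩
        have hle : s ≤ 2 := Nat.le_of_dvd (by norm_num) hdvd
        obtain ⟨r, hr⟩ := hs
        omega
      simp only [hSS, Set.mem_setOf_eq, hs2']
      have hz := hpc z
      rw [hn2] at hz
      exact hz
    have hFz : ∀ z : F, Fn z = z ^ 2 + 1 := by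
      intro z
      rw [hFn z, hk0, hχ]
      norm_num [hall z]
    have hcard4 : (Set.univ : Set F).ncard = 4 := by
      rw [Set.ncard_univ, Nat.card_eq_fintype_card, hcard, hn2]
      norm_num
    have hbound : Sol.ncard ≤ 4 := by
      refine inj_count (le_of_eq hcard4) ?_
      intro hne
      refine ⟨fun p => p.1, fun p _ => Set.mem_univ _, ?_⟩
      rintro p ⟨eA, _⟩ q ⟨eA', _⟩ hpq
      have hpq' : p.1 = q.1 := hpq
      rw [hFz, hFz] at eA
      rw [hFz, hFz] at eA'
      have hsq : p.2 ^ 2 = q.2 ^ 2 := by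
        rw [hpq'] at eA
        linear_combination eA - eA'
      exact Prod.ext hpq' (sq_inj _ _ hsq)
    constructor
    · intro _
      rw [hbeta]
      exact hbound
    · intro _ _
      rw [hbeta]
      exact hbound.trans (by norm_num)
  -- main case
  obtain ⟨hN1, hN2, hkeven, hhodd⟩ := S13.arith hs hs2 hm (hn ▸ hk) hk0
  rw [← hn] at hN1 hN2 hhodd
  set h := n / 2 with hh
  have hn2h : n = 2 * h := by
    have : 2 ∣ n := hk ▸ Nat.gcd_dvd_right k n
    omega
  have hh0 : 0 < h := by omega
  have hpow4 : ∀ u : F, u ^ 4 ^ h = u := by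
    intro u
    have : (4 : ℕ) ^ h = 2 ^ n := by rw [hn2h, pow_mul]; norm_num
    rw [this]; exact hpc u
  have hmemC : ∀ z : F, z ^ 2 ^ k = z → z ^ 4 = z := fun z hz =>
    S13.memC_lemma k n hN1 hpow1 z hz
  have hCcard := S13.C_card (F := F)
  -- S-related power facts
  have Spowd : ∀ {x : F}, x ∈ SS → x ^ (2 ^ k + 1) ∈ SS := by
    intro x hx
    simp only [hSS, Set.mem_setOf_eq] at *
    have e : (x ^ (2 ^ k + 1)) ^ 2 ^ s = (x ^ 2 ^ s) ^ (2 ^ k + 1) := by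
      rw [← pow_mul, ← pow_mul, Nat.mul_comm]
    rw [e, hx]
  have Spull : ∀ {x : F}, x ^ (2 ^ k + 1) ∈ SS → x ∈ SS := by
    intro x hx
    simp only [hSS, Set.mem_setOf_eq] at *
    refine powd_inj k n hN2 hpow1 _ _ ?_
    have e : (x ^ 2 ^ s) ^ (2 ^ k + 1) = (x ^ (2 ^ k + 1)) ^ 2 ^ s := by
      rw [← pow_mul, ← pow_mul, Nat.mul_comm]
    rw [e, hx]
  -- normalized equations for solutions
  have Enorm : ∀ p ∈ Sol,
      p.1 ^ (2 ^ k + 1) + p.2 ^ (2 ^ k + 1) + χ p.1 + χ p.2 = b ∧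
      (p.1 + a) ^ (2 ^ k + 1) + (p.2 + a) ^ (2 ^ k + 1) + χ (p.1 + a) + χ (p.2 + a) = b := by
    intro p hp
    obtain ⟨h1, h2⟩ := hp
    rw [hFn, hFn] at h1 h2
    constructor
    · linear_combination h1
    · linear_combination h2
  have E3 : ∀ p ∈ Sol, L k a (p.1 + p.2) = χ p.1 + χ p.2 + χ (p.1 + a) + χ (p.2 + a) := by
    intro p hp
    obtain ⟨eqA, eqB⟩ := Enorm p hp
    have ex := expand k p.1 a
    have ey := expand k p.2 a
    have hf : (p.1 + p.2) ^ 2 ^ k = p.1 ^ 2 ^ k + p.2 ^ 2 ^ k := frob k _ _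
    rw [L] at ex ey
    rw [L, hf]
    linear_combination eqA + eqB - ex - ey +
      (b - p.1 ^ (2 ^ k + 1) - p.2 ^ (2 ^ k + 1) - a ^ (2 ^ k + 1) - χ p.1 - χ p.2
        - χ (p.1 + a) - χ (p.2 + a)) * (two_eq_zero (F := F))
  have hd0 : ∀ p ∈ Sol, p.1 ≠ p.2 := by
    intro p hp heq
    obtain ⟨eqA, _⟩ := Enorm p hp
    rw [heq] at eqA
    apply hb
    linear_combination -eqA + (p.2 ^ (2 ^ k + 1) + χ p.2) * (two_eq_zero (F := F))
  -- key algebra: expanding the Gold difference along a kernel direction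
  have deriv : ∀ x c : F, c ^ 4 = c →
      (x + c * a) ^ (2 ^ k + 1) = x ^ (2 ^ k + 1) + c * L k a x + c ^ 2 * a ^ (2 ^ k + 1) := by
    intro x c hc
    have hcp : c ^ 2 ^ k = c := powEven c hc k hkeven
    have e1 := expand k x (c * a)
    rw [L, mul_pow, hcp] at e1
    rw [e1, L]
    have e2 : (c * a) ^ (2 ^ k + 1) = c ^ 2 * a ^ (2 ^ k + 1) := by
      rw [mul_pow, pow_succ, hcp]
      ring
    rw [e2]
    ring
  -- counting lemma for "kernel type" solution sets
  have countQ : ∀ w : F, Set.ncard {p : F × F | ∃ c : F, c ^ 4 = c ∧ c ≠ 0 ∧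
      p.2 = p.1 + c * a ∧ c * L k a p.1 = w + c ^ 2 * a ^ (2 ^ k + 1)} ≤ 4 := by
    intro w
    apply inj_count hCcard
    rintro ⟨p₀, c₀, hc₀, hc₀0, hy₀, he₀⟩
    have hT₀ := trace_val h k hkeven hh0 hhodd hpow4 a p₀.1 c₀ w ha hc₀ he₀
    have hcof : ∀ (p : F × F) (c : F), c ^ 4 = c →
        c * L k a p.1 = w + c ^ 2 * a ^ (2 ^ k + 1) → c = c₀ := by
      intro p c hc he
      have t1 := trace_val h k hkeven hh0 hhodd hpow4 a p.1 c w ha hc he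
      exact sq_inj c c₀ (t1.symm.trans hT₀)
    have hkerp : ∀ (p : F × F) (c : F), c ^ 4 = c → c ≠ 0 →
        c * L k a p.1 = w + c ^ 2 * a ^ (2 ^ k + 1) → L k a (p.1 + p₀.1) = 0 := by
      intro p c hc hc0 he
      have hcc : c = c₀ := hcof p c hc he
      subst hcc
      have hLL : L k a p.1 = L k a p₀.1 := mul_left_cancel₀ hc0 (he.trans he₀.symm)
      simp only [L] at hLL ⊢
      rw [frob k p.1 p₀.1]
      linear_combination hLL + (a ^ 2 ^ k * p₀.1 + a * p₀.1 ^ 2 ^ k) * (two_eq_zero (F := F))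
    refine ⟨fun p => (p.1 + p₀.1) / a, ?_, ?_⟩
    · rintro p ⟨c, hc, hc0, hy, he⟩
      obtain ⟨c', hc', hxx⟩ := ker_L k hmemC a (p.1 + p₀.1) ha (hkerp p c hc hc0 he)
      show (p.1 + p₀.1) / a ∈ {z : F | z ^ 4 = z}
      have heq : (p.1 + p₀.1) / a = c' := by rw [hxx, mul_div_cancel_right₀ c' ha]
      rw [Set.mem_setOf_eq, heq]
      exact hc'
    · rintro p ⟨c, hc, hc0, hy, he⟩ q ⟨c2, hc2, hc20, hy2, he2⟩ hpq
      have h1 : p.1 = q.1 := by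
        have h' : p.1 + p₀.1 = q.1 + p₀.1 :=
          mul_right_cancel₀ ha ((div_eq_div_iff ha ha).mp hpq)
        exact add_right_cancel h'
      have h2 : p.2 = q.2 := by
        rw [hy, hy2, hcof p c hc he, hcof q c2 hc2 he2, h1]
      exact Prod.ext h1 h2
  constructor
  · -- first bullet : a ∈ S or b ∈ S
    intro hab
    rw [hbeta]
    refine le_trans (Set.ncard_le_ncard ?_ (Set.toFinite _)) (countQ b)
    intro p hp
    obtain ⟨eqA, eqB⟩ := Enorm p hp
    have e3 := E3 p hp
    -- Step 1: the kernel equation L a (x+y) = 0, plus (in case b ∈ S) the membership iff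
    have hE0 : L k a (p.1 + p.2) = 0 ∧
        (a ∈ SS ∨ (p.1 ∈ SS ↔ p.2 ∈ SS)) := by
      rcases hab with haS | hbS
      · have hx : χ (p.1 + a) = χ p.1 := by
          rw [hχ]; exact if_congr (SaddIff haS p.1) rfl rfl
        have hy : χ (p.2 + a) = χ p.2 := by
          rw [hχ]; exact if_congr (SaddIff haS p.2) rfl rfl
        rw [hx, hy] at e3
        refine ⟨by linear_combination e3 + (χ p.1 + χ p.2) * (two_eq_zero (F := F)), Or.inl haS⟩
      · have hxy : p.1 ∈ SS ↔ p.2 ∈ SS := by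
          by_cases hx1 : p.1 ∈ SS <;> by_cases hx2 : p.2 ∈ SS <;>
            [exact iff_of_true hx1 hx2; skip; skip; exact iff_of_false hx1 hx2]
          · exfalso
            apply hx2
            have hval : p.2 ^ (2 ^ k + 1) = p.1 ^ (2 ^ k + 1) + b + 1 := by
              have c1 : χ p.1 = 1 := by rw [hχ]; exact if_pos hx1
              have c2 : χ p.2 = 0 := by rw [hχ]; exact if_neg hx2
              rw [c1, c2] at eqA
              linear_combination eqA - (p.1 ^ (2 ^ k + 1) + 1) * (two_eq_zero (F := F))
            exact Spull (hval ▸ Sadd (Sadd (Spowd hx1) hbS) S1)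
          · exfalso
            apply hx1
            have hval : p.1 ^ (2 ^ k + 1) = p.2 ^ (2 ^ k + 1) + b + 1 := by
              have c1 : χ p.1 = 0 := by rw [hχ]; exact if_neg hx1
              have c2 : χ p.2 = 1 := by rw [hχ]; exact if_pos hx2
              rw [c1, c2] at eqA
              linear_combination eqA - (p.2 ^ (2 ^ k + 1) + 1) * (two_eq_zero (F := F))
            exact Spull (hval ▸ Sadd (Sadd (Spowd hx2) hbS) S1)
        have hxy2 : p.1 + a ∈ SS ↔ p.2 + a ∈ SS := by
          by_cases hx1 : p.1 + a ∈ SS <;> by_cases hx2 : p.2 + a ∈ SS <;>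
            [exact iff_of_true hx1 hx2; skip; skip; exact iff_of_false hx1 hx2]
          · exfalso
            apply hx2
            have hval : (p.2 + a) ^ (2 ^ k + 1) = (p.1 + a) ^ (2 ^ k + 1) + b + 1 := by
              have c1 : χ (p.1 + a) = 1 := by rw [hχ]; exact if_pos hx1
              have c2 : χ (p.2 + a) = 0 := by rw [hχ]; exact if_neg hx2
              rw [c1, c2] at eqB
              linear_combination eqB - ((p.1 + a) ^ (2 ^ k + 1) + 1) * (two_eq_zero (F := F))
            exact Spull (hval ▸ Sadd (Sadd (Spowd hx1) hbS) S1)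
          · exfalso
            apply hx1
            have hval : (p.1 + a) ^ (2 ^ k + 1) = (p.2 + a) ^ (2 ^ k + 1) + b + 1 := by
              have c1 : χ (p.1 + a) = 0 := by rw [hχ]; exact if_neg hx1
              have c2 : χ (p.2 + a) = 1 := by rw [hχ]; exact if_pos hx2
              rw [c1, c2] at eqB
              linear_combination eqB - ((p.2 + a) ^ (2 ^ k + 1) + 1) * (two_eq_zero (F := F))
            exact Spull (hval ▸ Sadd (Sadd (Spowd hx2) hbS) S1)
        have cx : χ p.1 = χ p.2 := by rw [hχ]; exact if_congr hxy rfl rfl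
        have cy : χ (p.1 + a) = χ (p.2 + a) := by rw [hχ]; exact if_congr hxy2 rfl rfl
        rw [cx, cy] at e3
        refine ⟨by linear_combination e3 + (χ p.2 + χ (p.2 + a)) * (two_eq_zero (F := F)),
          Or.inr hxy⟩
    obtain ⟨hE0', hiff⟩ := hE0
    obtain ⟨c, hc, hvca⟩ := ker_L k hmemC a (p.1 + p.2) ha hE0'
    have hc0 : c ≠ 0 := by
      rintro rfl
      rw [zero_mul] at hvca
      exact hd0 p hp (add_eq_zero_iff.mp hvca)
    have hy2 : p.2 = p.1 + c * a := by
      linear_combination hvca - p.1 * (two_eq_zero (F := F))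
    have hxyiff : p.1 ∈ SS ↔ p.2 ∈ SS := by
      rcases hiff with haS | hiff
      · rw [hy2]
        exact (SaddIff (Smul (SC hc) haS) p.1).symm
      · exact hiff
    have hχ2 : χ p.1 = χ p.2 := by rw [hχ]; exact if_congr hxyiff rfl rfl
    have he : c * L k a p.1 = b + c ^ 2 * a ^ (2 ^ k + 1) := by
      have hdv := deriv p.1 c hc
      rw [hy2] at eqA
      rw [hdv] at eqA
      rw [hy2] at hχ2
      rw [← hχ2] at eqA
      linear_combination eqA - (p.1 ^ (2 ^ k + 1) + χ p.1 + c ^ 2 * a ^ (2 ^ k + 1)) *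
        (two_eq_zero (F := F))
    exact ⟨c, hc, hc0, hy2, he⟩
  · -- second bullet : a ∉ S and b ∉ S
    intro haS hbS
    rw [hbeta]
    -- subsingleton counting for the "kernel + membership" pieces
    have countM1 : Set.ncard {p : F × F | (∃ c : F, c ^ 4 = c ∧ c ≠ 0 ∧ p.2 = p.1 + c * a ∧
        c * L k a p.1 = (b + 1) + c ^ 2 * a ^ (2 ^ k + 1)) ∧ p.1 ∈ SS} ≤ 1 := by
      apply sub_count
      rintro p ⟨⟨c, hc, hc0, hy, he⟩, hmem⟩ q ⟨⟨c2, hc2, hc20, hy2, he2⟩, hmem2⟩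
      have t1 := trace_val h k hkeven hh0 hhodd hpow4 a p.1 c (b + 1) ha hc he
      have t2 := trace_val h k hkeven hh0 hhodd hpow4 a q.1 c2 (b + 1) ha hc2 he2
      have hcc : c = c2 := sq_inj _ _ (t1.symm.trans t2)
      subst hcc
      have hLL : L k a p.1 = L k a q.1 := mul_left_cancel₀ hc0 (he.trans he2.symm)
      have hker : L k a (p.1 + q.1) = 0 := by
        simp only [L] at hLL ⊢
        rw [frob k p.1 q.1]
        linear_combination hLL + (a ^ 2 ^ k * q.1 + a * q.1 ^ 2 ^ k) * (two_eq_zero (F := F))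
      obtain ⟨c', hc', hxx⟩ := ker_L k hmemC a (p.1 + q.1) ha hker
      have hc'0 : c' = 0 := by
        by_contra hne
        apply haS
        apply Smul_cancel (SC hc') hne
        rw [← hxx]
        exact Sadd hmem hmem2
      rw [hc'0, zero_mul] at hxx
      have h1 : p.1 = q.1 := add_eq_zero_iff.mp hxx
      exact Prod.ext h1 (by rw [hy, hy2, h1])
    have countM2 : Set.ncard {p : F × F | (∃ c : F, c ^ 4 = c ∧ c ≠ 0 ∧ p.2 = p.1 + c * a ∧
        c * L k a p.1 = (b + 1) + c ^ 2 * a ^ (2 ^ k + 1)) ∧ p.2 ∈ SS} ≤ 1 := by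
      apply sub_count
      rintro p ⟨⟨c, hc, hc0, hy, he⟩, hmem⟩ q ⟨⟨c2, hc2, hc20, hy2, he2⟩, hmem2⟩
      have t1 := trace_val h k hkeven hh0 hhodd hpow4 a p.1 c (b + 1) ha hc he
      have t2 := trace_val h k hkeven hh0 hhodd hpow4 a q.1 c2 (b + 1) ha hc2 he2
      have hcc : c = c2 := sq_inj _ _ (t1.symm.trans t2)
      subst hcc
      have hLL : L k a p.1 = L k a q.1 := mul_left_cancel₀ hc0 (he.trans he2.symm)
      have hker : L k a (p.1 + q.1) = 0 := by
        simp only [L] at hLL ⊢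
        rw [frob k p.1 q.1]
        linear_combination hLL + (a ^ 2 ^ k * q.1 + a * q.1 ^ 2 ^ k) * (two_eq_zero (F := F))
      obtain ⟨c', hc', hxx⟩ := ker_L k hmemC a (p.1 + q.1) ha hker
      have hsum : p.1 + q.1 = p.2 + q.2 := by
        rw [hy, hy2]
        linear_combination -(c * a) * (two_eq_zero (F := F))
      have hc'0 : c' = 0 := by
        by_contra hne
        apply haS
        apply Smul_cancel (SC hc') hne
        rw [← hxx, hsum]
        exact Sadd hmem hmem2
      rw [hc'0, zero_mul] at hxx
      have h1 : p.1 = q.1 := add_eq_zero_iff.mp hxx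
      exact Prod.ext h1 (by rw [hy, hy2, h1])
    -- counting for the "non-kernel" pieces
    have countV : ∀ (w : F) (M : F → F → Prop),
        (∀ v x x', M x v → M x' v → x + x' ∈ SS) →
        Set.ncard {p : F × F | L k a (p.1 + p.2) = 1 ∧ (p.1 + p.2) ∉ SS ∧
          L k (p.1 + p.2) p.1 = w + (p.1 + p.2) ^ (2 ^ k + 1) ∧ M p.1 (p.1 + p.2)} ≤ 4 := by
      intro w M hMsep
      apply inj_count hCcard
      rintro ⟨p₀, hL₀, hS₀, he₀, hM₀⟩
      refine ⟨fun p => (p.1 + p.2 + (p₀.1 + p₀.2)) / a, ?_, ?_⟩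
      · rintro p ⟨hL1, hS1, he1, hM1⟩
        have hker : L k a (p.1 + p.2 + (p₀.1 + p₀.2)) = 0 := by
          simp only [L] at hL1 hL₀ ⊢
          rw [frob k (p.1 + p.2) (p₀.1 + p₀.2)]
          linear_combination hL1 + hL₀ + (two_eq_zero (F := F))
        obtain ⟨c', hc', hxx⟩ := ker_L k hmemC a _ ha hker
        show (p.1 + p.2 + (p₀.1 + p₀.2)) / a ∈ {z : F | z ^ 4 = z}
        have heq : (p.1 + p.2 + (p₀.1 + p₀.2)) / a = c' := by
          rw [hxx, mul_div_cancel_right₀ c' ha]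
        rw [Set.mem_setOf_eq, heq]
        exact hc'
      · rintro p ⟨hL1, hS1, he1, hM1⟩ q ⟨hL2, hS2, he2, hM2⟩ hpq
        have hv : p.1 + p.2 = q.1 + q.2 := by
          have h' : p.1 + p.2 + (p₀.1 + p₀.2) = q.1 + q.2 + (p₀.1 + p₀.2) :=
            mul_right_cancel₀ ha ((div_eq_div_iff ha ha).mp hpq)
          exact add_right_cancel h'
        have hvne : p.1 + p.2 ≠ 0 := by
          intro h0
          rw [h0] at hL1
          have h2k : (2 : ℕ) ^ k ≠ 0 := pow_ne_zero _ two_ne_zero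
          simp only [L, zero_pow h2k, zero_mul, mul_zero, add_zero, mul_zero] at hL1
          exact one_ne_zero hL1.symm
        have hker2 : L k (p.1 + p.2) (p.1 + q.1) = 0 := by
          rw [hv] at he1
          have hLL : L k (q.1 + q.2) p.1 = L k (q.1 + q.2) q.1 := he1.trans he2.symm
          rw [hv]
          simp only [L] at hLL ⊢
          rw [frob k p.1 q.1]
          linear_combination hLL +
            ((q.1 + q.2) ^ 2 ^ k * q.1 + (q.1 + q.2) * q.1 ^ 2 ^ k) * (two_eq_zero (F := F))
        obtain ⟨c'', hc'', hxx⟩ := ker_L k hmemC (p.1 + p.2) (p.1 + q.1) hvne hker2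
        have hM2' : M q.1 (p.1 + p.2) := by rw [hv]; exact hM2
        have hc''0 : c'' = 0 := by
          by_contra hne
          apply hS1
          apply Smul_cancel (SC hc'') hne
          rw [← hxx]
          exact hMsep _ _ _ hM1 hM2'
        rw [hc''0, zero_mul] at hxx
        have h1 : p.1 = q.1 := add_eq_zero_iff.mp hxx
        have h2 : p.2 = q.2 := by
          have := hv
          rw [h1] at this
          exact add_left_cancel this
        exact Prod.ext h1 h2
    -- classification of all solutions into seven pieces
    have hsub : Sol ⊆
        ({p : F × F | ∃ c : F, c ^ 4 = c ∧ c ≠ 0 ∧ p.2 = p.1 + c * a ∧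
            c * L k a p.1 = b + c ^ 2 * a ^ (2 ^ k + 1)} ∪
          {p : F × F | (∃ c : F, c ^ 4 = c ∧ c ≠ 0 ∧ p.2 = p.1 + c * a ∧
            c * L k a p.1 = (b + 1) + c ^ 2 * a ^ (2 ^ k + 1)) ∧ p.1 ∈ SS} ∪
          {p : F × F | (∃ c : F, c ^ 4 = c ∧ c ≠ 0 ∧ p.2 = p.1 + c * a ∧
            c * L k a p.1 = (b + 1) + c ^ 2 * a ^ (2 ^ k + 1)) ∧ p.2 ∈ SS} ∪
          {p : F × F | L k a (p.1 + p.2) = 1 ∧ (p.1 + p.2) ∉ SS ∧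
            L k (p.1 + p.2) p.1 = (b + 1) + (p.1 + p.2) ^ (2 ^ k + 1) ∧ p.1 ∈ SS} ∪
          {p : F × F | L k a (p.1 + p.2) = 1 ∧ (p.1 + p.2) ∉ SS ∧
            L k (p.1 + p.2) p.1 = (b + 1) + (p.1 + p.2) ^ (2 ^ k + 1) ∧
            p.1 + (p.1 + p.2) ∈ SS} ∪
          {p : F × F | L k a (p.1 + p.2) = 1 ∧ (p.1 + p.2) ∉ SS ∧
            L k (p.1 + p.2) p.1 = b + (p.1 + p.2) ^ (2 ^ k + 1) ∧ p.1 + a ∈ SS} ∪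
          {p : F × F | L k a (p.1 + p.2) = 1 ∧ (p.1 + p.2) ∉ SS ∧
            L k (p.1 + p.2) p.1 = b + (p.1 + p.2) ^ (2 ^ k + 1) ∧
            p.1 + (p.1 + p.2) + a ∈ SS}) := by
      intro p hp
      obtain ⟨eqA, eqB⟩ := Enorm p hp
      have e3 := E3 p hp
      have hyv : p.2 = p.1 + (p.1 + p.2) := by
        linear_combination -p.1 * (two_eq_zero (F := F))
      -- helper: from the value of x^d + y^d derive the L_v equation
      have derivV : ∀ w' : F, p.1 ^ (2 ^ k + 1) + p.2 ^ (2 ^ k + 1) = w' →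
          L k (p.1 + p.2) p.1 = w' + (p.1 + p.2) ^ (2 ^ k + 1) := by
        intro w' hw'
        have exv := expand k p.1 (p.1 + p.2)
        rw [hyv, exv] at hw'
        linear_combination hw' - (p.1 ^ (2 ^ k + 1) + (p.1 + p.2) ^ (2 ^ k + 1)) *
          (two_eq_zero (F := F))
      -- helper: kernel case equation
      have derivK : ∀ (c : F) (w' : F), c ^ 4 = c → p.2 = p.1 + c * a →
          p.1 ^ (2 ^ k + 1) + p.2 ^ (2 ^ k + 1) = w' →
          c * L k a p.1 = w' + c ^ 2 * a ^ (2 ^ k + 1) := by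
        intro c w' hc hy2eq hw
        rw [hy2eq, deriv p.1 c hc] at hw
        linear_combination hw - (p.1 ^ (2 ^ k + 1) + c ^ 2 * a ^ (2 ^ k + 1)) *
          (two_eq_zero (F := F))
      simp only [Set.mem_union, Set.mem_setOf_eq]
      by_cases exy : (p.1 ∈ SS ↔ p.2 ∈ SS) <;> by_cases exy' : ((p.1 + a) ∈ SS ↔ (p.2 + a) ∈ SS)
      · -- (0,0) : kernel, w' = b
        have cx : χ p.1 = χ p.2 := by rw [hχ]; exact if_congr exy rfl rfl
        have cy : χ (p.1 + a) = χ (p.2 + a) := by rw [hχ]; exact if_congr exy' rfl rfl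
        have hE0 : L k a (p.1 + p.2) = 0 := by
          rw [cx, cy] at e3
          linear_combination e3 + (χ p.2 + χ (p.2 + a)) * (two_eq_zero (F := F))
        obtain ⟨c, hc, hvca⟩ := ker_L k hmemC a _ ha hE0
        have hc0 : c ≠ 0 := by
          rintro rfl
          rw [zero_mul] at hvca
          exact hd0 p hp (add_eq_zero_iff.mp hvca)
        have hy2eq : p.2 = p.1 + c * a := by
          linear_combination hvca - p.1 * (two_eq_zero (F := F))
        have hw : p.1 ^ (2 ^ k + 1) + p.2 ^ (2 ^ k + 1) = b := by
          rw [cx] at eqA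
          linear_combination eqA - χ p.2 * (two_eq_zero (F := F))
        exact Or.inl (Or.inl (Or.inl (Or.inl (Or.inl (Or.inl
          ⟨c, hc, hc0, hy2eq, derivK c b hc hy2eq hw⟩)))))
      · -- (0,1) : non-kernel, w' = b, tags P01 / P00
        have cx : χ p.1 = χ p.2 := by rw [hχ]; exact if_congr exy rfl rfl
        have hw : p.1 ^ (2 ^ k + 1) + p.2 ^ (2 ^ k + 1) = b := by
          rw [cx] at eqA
          linear_combination eqA - χ p.2 * (two_eq_zero (F := F))
        by_cases hy1 : p.1 + a ∈ SS
        · have hy2 : p.2 + a ∉ SS := fun hh => exy' (iff_of_true hy1 hh)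
          have c3 : χ (p.1 + a) = 1 := by rw [hχ]; exact if_pos hy1
          have c4 : χ (p.2 + a) = 0 := by rw [hχ]; exact if_neg hy2
          have hE1 : L k a (p.1 + p.2) = 1 := by
            rw [cx, c3, c4] at e3
            linear_combination e3 + χ p.2 * (two_eq_zero (F := F))
          have hvS : (p.1 + p.2) ∉ SS := by
            intro hvs
            apply hy2
            have e : p.2 + a = (p.1 + a) + (p.1 + p.2) := by
              linear_combination -p.1 * (two_eq_zero (F := F))
            rw [e]
            exact Sadd hy1 hvs
          exact Or.inl (Or.inr ⟨hE1, hvS, derivV b hw, hy1⟩)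
        · have hy2 : p.2 + a ∈ SS := by tauto
          have c3 : χ (p.1 + a) = 0 := by rw [hχ]; exact if_neg hy1
          have c4 : χ (p.2 + a) = 1 := by rw [hχ]; exact if_pos hy2
          have hE1 : L k a (p.1 + p.2) = 1 := by
            rw [cx, c3, c4] at e3
            linear_combination e3 + χ p.2 * (two_eq_zero (F := F))
          have hvS : (p.1 + p.2) ∉ SS := by
            intro hvs
            apply hy1
            have e : p.1 + a = (p.2 + a) + (p.1 + p.2) := by
              linear_combination -p.2 * (two_eq_zero (F := F))
            rw [e]
            exact Sadd hy2 hvs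
          have hmem : p.1 + (p.1 + p.2) + a ∈ SS := by
            have e : p.1 + (p.1 + p.2) + a = p.2 + a := by
              linear_combination p.1 * (two_eq_zero (F := F))
            rw [e]
            exact hy2
          exact Or.inr ⟨hE1, hvS, derivV b hw, hmem⟩
      · -- (1,0) : non-kernel, w' = b + 1, tags P11 / P10
        have cy : χ (p.1 + a) = χ (p.2 + a) := by rw [hχ]; exact if_congr exy' rfl rfl
        by_cases hx1 : p.1 ∈ SS
        · have hx2 : p.2 ∉ SS := fun hh => exy (iff_of_true hx1 hh)
          have c1 : χ p.1 = 1 := by rw [hχ]; exact if_pos hx1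
          have c2 : χ p.2 = 0 := by rw [hχ]; exact if_neg hx2
          have hE1 : L k a (p.1 + p.2) = 1 := by
            rw [c1, c2, cy] at e3
            linear_combination e3 + χ (p.2 + a) * (two_eq_zero (F := F))
          have hvS : (p.1 + p.2) ∉ SS := by
            intro hvs
            apply hx2
            rw [hyv]
            exact Sadd hx1 hvs
          have hw : p.1 ^ (2 ^ k + 1) + p.2 ^ (2 ^ k + 1) = b + 1 := by
            rw [c1, c2] at eqA
            linear_combination eqA - two_eq_zero (F := F)
          exact Or.inl (Or.inl (Or.inl (Or.inr ⟨hE1, hvS, derivV (b + 1) hw, hx1⟩)))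
        · have hx2 : p.2 ∈ SS := by tauto
          have c1 : χ p.1 = 0 := by rw [hχ]; exact if_neg hx1
          have c2 : χ p.2 = 1 := by rw [hχ]; exact if_pos hx2
          have hE1 : L k a (p.1 + p.2) = 1 := by
            rw [c1, c2, cy] at e3
            linear_combination e3 + χ (p.2 + a) * (two_eq_zero (F := F))
          have hvS : (p.1 + p.2) ∉ SS := by
            intro hvs
            apply hx1
            have e : p.1 = p.2 + (p.1 + p.2) := by
              linear_combination -p.2 * (two_eq_zero (F := F))
            rw [e]
            exact Sadd hx2 hvs
          have hw : p.1 ^ (2 ^ k + 1) + p.2 ^ (2 ^ k + 1) = b + 1 := by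
            rw [c1, c2] at eqA
            linear_combination eqA - two_eq_zero (F := F)
          have hmem : p.1 + (p.1 + p.2) ∈ SS := by
            rw [← hyv]
            exact hx2
          exact Or.inl (Or.inl (Or.inr ⟨hE1, hvS, derivV (b + 1) hw, hmem⟩))
      · -- (1,1) : kernel, w' = b+1, tags Z1a / Z1b
        have cysum : χ (p.1 + a) + χ (p.2 + a) = 1 := by
          by_cases hy1 : p.1 + a ∈ SS
          · have hy2 : p.2 + a ∉ SS := fun hh => exy' (iff_of_true hy1 hh)
            rw [hχ]
            simp [if_pos hy1, if_neg hy2]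
          · have hy2 : p.2 + a ∈ SS := by tauto
            rw [hχ]
            simp [if_neg hy1, if_pos hy2]
        by_cases hx1 : p.1 ∈ SS
        · have hx2 : p.2 ∉ SS := fun hh => exy (iff_of_true hx1 hh)
          have c1 : χ p.1 = 1 := by rw [hχ]; exact if_pos hx1
          have c2 : χ p.2 = 0 := by rw [hχ]; exact if_neg hx2
          have hE0 : L k a (p.1 + p.2) = 0 := by
            rw [c1, c2] at e3
            linear_combination e3 + cysum + two_eq_zero (F := F)
          obtain ⟨c, hc, hvca⟩ := ker_L k hmemC a _ ha hE0
          have hc0 : c ≠ 0 := by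
            rintro rfl
            rw [zero_mul] at hvca
            exact hd0 p hp (add_eq_zero_iff.mp hvca)
          have hy2eq : p.2 = p.1 + c * a := by
            linear_combination hvca - p.1 * (two_eq_zero (F := F))
          have hw : p.1 ^ (2 ^ k + 1) + p.2 ^ (2 ^ k + 1) = b + 1 := by
            rw [c1, c2] at eqA
            linear_combination eqA - two_eq_zero (F := F)
          exact Or.inl (Or.inl (Or.inl (Or.inl (Or.inl (Or.inr
            ⟨⟨c, hc, hc0, hy2eq, derivK c (b + 1) hc hy2eq hw⟩, hx1⟩)))))
        · have hx2 : p.2 ∈ SS := by tauto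
          have c1 : χ p.1 = 0 := by rw [hχ]; exact if_neg hx1
          have c2 : χ p.2 = 1 := by rw [hχ]; exact if_pos hx2
          have hE0 : L k a (p.1 + p.2) = 0 := by
            rw [c1, c2] at e3
            linear_combination e3 + cysum + two_eq_zero (F := F)
          obtain ⟨c, hc, hvca⟩ := ker_L k hmemC a _ ha hE0
          have hc0 : c ≠ 0 := by
            rintro rfl
            rw [zero_mul] at hvca
            exact hd0 p hp (add_eq_zero_iff.mp hvca)
          have hy2eq : p.2 = p.1 + c * a := by
            linear_combination hvca - p.1 * (two_eq_zero (F := F))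
          have hw : p.1 ^ (2 ^ k + 1) + p.2 ^ (2 ^ k + 1) = b + 1 := by
            rw [c1, c2] at eqA
            linear_combination eqA - two_eq_zero (F := F)
          exact Or.inl (Or.inl (Or.inl (Or.inl (Or.inr
            ⟨⟨c, hc, hc0, hy2eq, derivK c (b + 1) hc hy2eq hw⟩, hx2⟩))))
    refine le_trans (Set.ncard_le_ncard hsub (Set.toFinite _))
      (union7_le _ _ _ _ _ _ _ (countQ b) countM1 countM2 ?_ ?_ ?_ ?_)
    · exact countV (b + 1) (fun x v => x ∈ SS) (fun v x x' h1 h2 => Sadd h1 h2)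
    · exact countV (b + 1) (fun x v => x + v ∈ SS) (fun v x x' h1 h2 => by
        have h3 := Sadd h1 h2
        have e : (x + v) + (x' + v) = x + x' := by
          linear_combination v * (two_eq_zero (F := F))
        rwa [e] at h3)
    · exact countV b (fun x v => x + a ∈ SS) (fun v x x' h1 h2 => by
        have h3 := Sadd h1 h2
        have e : (x + a) + (x' + a) = x + x' := by
          linear_combination a * (two_eq_zero (F := F))
        rwa [e] at h3)
    · exact countV b (fun x v => x + v + a ∈ SS) (fun v x x' h1 h2 => by
        have h3 := Sadd h1 h2
        have e : (x + v + a) + (x' + v + a) = x + x' := by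
          linear_combination (v + a) * (two_eq_zero (F := F))
        rwa [e] at h3)
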